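/- For every ε ∈ [0,1/2], the function U^(ε) : [0,1] → [0,1] defined by U^(ε)(x) = 1 if x > 1−ε, U^(ε)(x) = x if ε ≤ x ≤ 1−ε, and U^(ε)(x) = 0 if x < ε, is a dual feasible function. -/
import Mathlib


/-- A function `u : [0,1] → [0,1]` is *dual feasible* if it maps `[0,1]` into `[0,1]`
and for every finite family `x₁, …, xₙ` of numbers in `[0,1]` with `∑ xⱼ ≤ 1`
one has `∑ u (xⱼ) ≤ 1`. -/
def DualFeasible (u : ℝ → ℝ) : Prop :=
  (∀ x ∈ Set.Icc (0 : ℝ) 1, u x ∈ Set.Icc (0 : ℝ) 1) ∧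
  ∀ (n : ℕ) (x : Fin n → ℝ), (∀ j, x j ∈ Set.Icc (0 : ℝ) 1) →
    ∑ j, x j ≤ 1 → ∑ j, u (x j) ≤ 1

open Classical in
/-- For every `ε ∈ [0,1/2]`, the function `U^(ε)` with `U^(ε)(x) = 1` for `x > 1 - ε`,
`U^(ε)(x) = x` for `ε ≤ x ≤ 1 - ε`, and `U^(ε)(x) = 0` for `x < ε`,
is a dual feasible function. -/
theorem U_eps_dualFeasible (ε : ℝ) (hε : ε ∈ Set.Icc (0 : ℝ) (1 / 2)) :
    DualFeasible (fun x : ℝ =>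
      if 1 - ε < x then 1
      else if x < ε then 0
      else x) := by
  obtain ⟨hε0, hε2⟩ := hε
  constructor
  · intro x hx
    obtain ⟨hx0, hx1⟩ := hx
    by_cases h1 : 1 - ε < x
    · simp [h1]
    · by_cases h2 : x < ε
      · simp [h1, h2]
      · simp only [if_neg h1, if_neg h2]
        exact ⟨hx0, hx1⟩
  · intro n x hx hsum
    simp only []
    by_cases h : ∃ j, 1 - ε < x j
    · obtain ⟨j0, hj0⟩ := h
      have hothers : ∀ j, j ≠ j0 → x j < ε := by
        intro j hj
        have h1 : x j0 + ∑ i ∈ Finset.univ.erase j0, x i = ∑ i, x i :=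
          Finset.add_sum_erase _ _ (Finset.mem_univ j0)
        have h3 : x j ≤ ∑ i ∈ Finset.univ.erase j0, x i :=
          Finset.single_le_sum (fun i _ => (hx i).1)
            (Finset.mem_erase.mpr ⟨hj, Finset.mem_univ j⟩)
        linarith
      have key : ∑ j, (if 1 - ε < x j then (1:ℝ) else if x j < ε then 0 else x j) = 1 := by
        rw [← Finset.add_sum_erase _ _ (Finset.mem_univ j0), if_pos hj0]
        have hz : ∑ i ∈ Finset.univ.erase j0,
            (if 1 - ε < x i then (1:ℝ) else if x i < ε then 0 else x i) = 0 := by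
          apply Finset.sum_eq_zero
          intro i hi
          have hlt := hothers i (Finset.mem_erase.mp hi).1
          have hnot : ¬ (1 - ε < x i) := by push_neg; linarith
          simp [hnot, hlt]
        rw [hz]; ring
      rw [key]
    · push_neg at h
      calc ∑ j, (if 1 - ε < x j then (1:ℝ) else if x j < ε then 0 else x j)
          ≤ ∑ j, x j := by
            apply Finset.sum_le_sum
            intro i _
            rw [if_neg (not_lt.mpr (h i))]
            split
            · exact (hx i).1
            · exact le_refl _
        _ ≤ 1 := hsum
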